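/- Let K ≥ t ≥ 2 be integers and define f(x_1,…,x_K) = ∑_{i=1}^K x_i(1−x_i)^{t−1}. Then the maximum of f over the simplex {x_i ≥ 0, ∑_i x_i = 1} equals (1 − 1/K)^{t−1}, attained at x_i = 1/K for all i. -/

import Mathlib

/-- Tangent line trick: for `u ∈ [0,1]` and `c` with `n ≤ (n+1)c ` and `c ≤ 1`,
`(1-u)u^n ≤ (1-c)c^n + c^(n-1)((n+1)c - n)(c-u)`. -/
lemma key_tangent : ∀ n : ℕ, 1 ≤ n → ∀ c u : ℝ, 0 ≤ u → u ≤ 1 → c ≤ 1 →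
    (n : ℝ) ≤ ((n : ℝ) + 1) * c →
    (1 - u) * u ^ n ≤ (1 - c) * c ^ n + c ^ (n - 1) * (((n : ℝ) + 1) * c - n) * (c - u) := by
  intro n hn
  induction n, hn using Nat.le_induction with
  | base =>
    intro c u hu0 hu1 hc1 hc
    push_cast at hc ⊢
    simp only [pow_one, pow_zero]
    nlinarith [sq_nonneg (c - u)]
  | succ n hn IH =>
    intro c u hu0 hu1 hc1 hc
    obtain ⟨m, rfl⟩ := Nat.exists_eq_add_of_le hn
    push_cast at hc ⊢
    have hc0 : 0 ≤ c := by nlinarith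
    have hc' : ((1 + m : ℕ) : ℝ) ≤ (((1 + m : ℕ) : ℝ) + 1) * c := by push_cast; nlinarith
    have IH' := IH c u hu0 hu1 hc1 hc'
    push_cast at IH'
    have hA : 0 ≤ ((1 : ℝ) + m + 1) * c - (1 + m) := by nlinarith
    have h1 : (1 - u) * u ^ (1 + m + 1) ≤
        u * ((1 - c) * c ^ (1 + m) + c ^ (1 + m - 1) * (((1 : ℝ) + m + 1) * c - (1 + m)) * (c - u)) := by
      have := mul_le_mul_of_nonneg_left IH' hu0
      calc (1 - u) * u ^ (1 + m + 1) = u * ((1 - u) * u ^ (1 + m)) := by ring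
        _ ≤ _ := this
    have h2 : (1 - c) * c ^ (1 + m + 1) + c ^ (1 + m) * (((1 : ℝ) + m + 1 + 1) * c - (1 + m + 1)) * (c - u)
        - u * ((1 - c) * c ^ (1 + m) + c ^ m * (((1 : ℝ) + m + 1) * c - (1 + m)) * (c - u))
        = c ^ m * (((1 : ℝ) + m + 1) * c - (1 + m)) * (c - u) ^ 2 := by
      ring
    have hm1 : 1 + m - 1 = m := by omega
    rw [hm1] at h1
    nlinarith [h1, h2, mul_nonneg (mul_nonneg (pow_nonneg hc0 m) hA) (sq_nonneg (c - u))]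

/-- The maximum of `∑ xᵢ(1-xᵢ)^{t-1}` over the simplex `{xᵢ ≥ 0, ∑ xᵢ = 1}` is
`(1 - 1/K)^{t-1}`, attained at `xᵢ = 1/K` for all `i`. -/
theorem max_sum_mul_pow (K t : ℕ) (ht : 2 ≤ t) (hK : t ≤ K) :
    IsGreatest
      ((fun x : Fin K → ℝ => ∑ i, x i * (1 - x i) ^ (t - 1)) ''
        {x | (∀ i, 0 ≤ x i) ∧ ∑ i, x i = 1})
      ((1 - 1 / (K : ℝ)) ^ (t - 1)) ∧
    (fun x : Fin K → ℝ => ∑ i, x i * (1 - x i) ^ (t - 1)) (fun _ => 1 / (K : ℝ))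
      = (1 - 1 / (K : ℝ)) ^ (t - 1) := by
  have hK0 : 0 < K := by omega
  have hKR : (0 : ℝ) < K := by exact_mod_cast hK0
  have hKne : (K : ℝ) ≠ 0 := ne_of_gt hKR
  set c : ℝ := 1 - 1 / K with hc_def
  set n : ℕ := t - 1 with hn_def
  have hn1 : 1 ≤ n := by omega
  have heval : ∑ _i : Fin K, (1 / (K : ℝ)) * (1 - 1 / K) ^ n = c ^ n := by
    rw [Finset.sum_const, Finset.card_univ, Fintype.card_fin, nsmul_eq_mul, ← hc_def]
    field_simp
  constructor
  · constructor
    · exact ⟨fun _ => 1 / K, ⟨fun i => by positivity, by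
        rw [Finset.sum_const, Finset.card_univ, Fintype.card_fin, nsmul_eq_mul]; field_simp⟩,
        heval⟩
    · rintro y ⟨x, ⟨hx0, hxsum⟩, rfl⟩
      simp only
      have hx1 : ∀ i, x i ≤ 1 := by
        intro i
        rw [← hxsum]
        exact Finset.single_le_sum (fun j _ => hx0 j) (Finset.mem_univ i)
      have hcn : ((n : ℝ)) ≤ ((n : ℝ) + 1) * c := by
        have hnt : ((n : ℝ) + 1) = t := by
          have h : n + 1 = t := by omega
          exact_mod_cast h
        rw [hnt, hc_def]
        have htK : (t : ℝ) ≤ K := by exact_mod_cast hK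
        have : (t : ℝ) / K ≤ 1 := by
          rw [div_le_one hKR]; exact htK
        have hnle : ((n : ℝ)) = (t : ℝ) - 1 := by linarith
        rw [hnle]
        have : (t : ℝ) * (1 - 1 / K) = t - t / K := by ring
        rw [this]
        linarith [ (div_le_one hKR).mpr htK ]
      have hc1 : c ≤ 1 := by
        rw [hc_def]; have : 0 < 1 / (K : ℝ) := by positivity
        linarith
      have step : ∀ i : Fin K, x i * (1 - x i) ^ n ≤
          (1 - c) * c ^ n + c ^ (n - 1) * (((n : ℝ) + 1) * c - n) * (c - (1 - x i)) := by
        intro i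
        have := key_tangent n hn1 c (1 - x i) (by linarith [hx1 i]) (by linarith [hx0 i]) hc1 hcn
        simpa using this
      calc ∑ i, x i * (1 - x i) ^ n
          ≤ ∑ i : Fin K, ((1 - c) * c ^ n + c ^ (n - 1) * (((n : ℝ) + 1) * c - n) * (c - (1 - x i))) :=
            Finset.sum_le_sum fun i _ => step i
        _ = (K : ℝ) * ((1 - c) * c ^ n) + c ^ (n - 1) * (((n : ℝ) + 1) * c - n) * ((K : ℝ) * (c - 1) + 1) := by
            rw [Finset.sum_add_distrib, Finset.sum_const, Finset.card_univ, Fintype.card_fin,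
              nsmul_eq_mul, ← Finset.mul_sum]
            congr 1
            congr 1
            have : ∀ i : Fin K, c - (1 - x i) = (c - 1) + x i := fun i => by ring
            simp only [this]
            rw [Finset.sum_add_distrib, Finset.sum_const, Finset.card_univ, Fintype.card_fin,
              nsmul_eq_mul, hxsum]
        _ = c ^ n := by
            have h1 : (1 - c) = 1 / (K : ℝ) := by rw [hc_def]; ring
            have h2 : (K : ℝ) * (c - 1) + 1 = 0 := by rw [hc_def]; field_simp; ring
            rw [h1, h2, mul_zero, add_zero]
            field_simp
  · simpa using heval
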